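/- Let m, n be positive integers, C ∈ ℝ^{m×n}, and ε > 0. Then the unique minimizer of ⟨C,P⟩ - εH(P) over the set U(a) = {P ∈ ℝ^{m×n} : P_{ij} ≥ 0, Σ_{j=1}^n P_{ij} = 1/m for every i} is given by P*_{ij} = exp(-C_{ij}/ε) / ( m·Σ_{k=1}^n exp(-C_{ik}/ε) ); that is, each row of m·P* is the softmax of the vector (-C_{i1}/ε, …, -C_{in}/ε). -/

import Mathlib

open Real

private lemma key_ineq {x t : ℝ} (hx : 0 ≤ x) (ht : 0 < t) :
    t * Real.log t + (Real.log t + 1) * (x - t) ≤ x * Real.log x := by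
  rcases eq_or_lt_of_le hx with h | h
  · rw [← h]; simp only [Real.log_zero, zero_mul]; nlinarith
  · have hd : 0 < t / x := div_pos ht h
    have hl : Real.log (t / x) ≤ t / x - 1 := Real.log_le_sub_one_of_pos hd
    rw [Real.log_div ht.ne' h.ne'] at hl
    have h1 : x * (Real.log t - Real.log x) ≤ x * (t / x - 1) :=
      mul_le_mul_of_nonneg_left hl h.le
    have h2 : x * (t / x - 1) = t - x := by field_simp
    nlinarith

private lemma key_ineq_strict {x t : ℝ} (hx : 0 ≤ x) (ht : 0 < t) (hne : x ≠ t) :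
    t * Real.log t + (Real.log t + 1) * (x - t) < x * Real.log x := by
  rcases eq_or_lt_of_le hx with h | h
  · rw [← h]
    simp only [Real.log_zero, zero_mul]
    nlinarith
  · have hd : 0 < t / x := div_pos ht h
    have hd1 : t / x ≠ 1 := by
      intro hc
      exact hne (by field_simp at hc; linarith)
    have hl : Real.log (t / x) < t / x - 1 := Real.log_lt_sub_one_of_pos hd hd1
    rw [Real.log_div ht.ne' h.ne'] at hl
    have h1 : x * (Real.log t - Real.log x) < x * (t / x - 1) :=
      mul_lt_mul_of_pos_left hl h
    have h2 : x * (t / x - 1) = t - x := by field_simp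
    nlinarith

/-- the unique minimizer of the entropic OT objective over
nonnegative matrices whose every row sums to 1/m is the row-wise softmax of
-C/ε scaled by 1/m. -/
theorem entropic_ot_rowsum_softmax
    (m n : ℕ) (hm : 0 < m) (hn : 0 < n)
    (C : Matrix (Fin m) (Fin n) ℝ) (ε : ℝ) (hε : 0 < ε)
    (S : Set (Matrix (Fin m) (Fin n) ℝ))
    (hS : S = {P | (∀ i j, 0 ≤ P i j) ∧ (∀ i, ∑ j, P i j = 1 / (m : ℝ))})
    (Pstar : Matrix (Fin m) (Fin n) ℝ)
    (hPstar : ∀ i j, Pstar i j =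
      Real.exp (-(C i j) / ε) / ((m : ℝ) * ∑ k, Real.exp (-(C i k) / ε))) :
    Pstar ∈ S ∧
    IsMinOn (fun P : Matrix (Fin m) (Fin n) ℝ =>
        (∑ i, ∑ j, C i j * P i j) -
          ε * (-(∑ i, ∑ j, P i j * (Real.log (P i j) - 1)))) S Pstar ∧
    (∀ P ∈ S,
      IsMinOn (fun P : Matrix (Fin m) (Fin n) ℝ =>
        (∑ i, ∑ j, C i j * P i j) -
          ε * (-(∑ i, ∑ j, P i j * (Real.log (P i j) - 1)))) S P → P = Pstar) := by
  subst hS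
  have hmR : (0:ℝ) < (m:ℝ) := Nat.cast_pos.mpr hm
  haveI : Nonempty (Fin n) := Fin.pos_iff_nonempty.mp hn
  set Z : Fin m → ℝ := fun i => ∑ k, Real.exp (-(C i k) / ε) with hZ
  have hZpos : ∀ i, 0 < Z i := fun i =>
    Finset.sum_pos (fun k _ => Real.exp_pos _) Finset.univ_nonempty
  have hmZ : ∀ i, 0 < (m:ℝ) * Z i := fun i => mul_pos hmR (hZpos i)
  have hPpos : ∀ i j, 0 < Pstar i j := by
    intro i j; rw [hPstar i j]; exact div_pos (Real.exp_pos _) (hmZ i)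
  have hrowstar : ∀ i, ∑ j, Pstar i j = 1 / (m:ℝ) := by
    intro i
    simp only [hPstar]
    rw [← Finset.sum_div]
    have hzz : (∑ j, Real.exp (-(C i j) / ε)) = Z i := rfl
    rw [hzz, mul_comm ((m:ℝ)) (Z i), ← div_div, div_self (hZpos i).ne']
  have hmem : Pstar ∈ {P : Matrix (Fin m) (Fin n) ℝ |
      (∀ i j, 0 ≤ P i j) ∧ (∀ i, ∑ j, P i j = 1 / (m : ℝ))} :=
    ⟨fun i j => (hPpos i j).le, hrowstar⟩
  have hlogP : ∀ i j, Real.log (Pstar i j) =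
      -(C i j) / ε - Real.log ((m:ℝ) * Z i) := by
    intro i j
    rw [hPstar i j, Real.log_div (Real.exp_pos _).ne' (hmZ i).ne', Real.log_exp]
  -- the separable objective
  set g : Fin m → Fin n → ℝ → ℝ :=
    fun i j x => C i j * x + ε * (x * (Real.log x - 1)) with hg
  set lam : Fin m → ℝ := fun i => -(ε * Real.log ((m:ℝ) * Z i)) with hlam
  set F : Matrix (Fin m) (Fin n) ℝ → ℝ :=
    fun P => ∑ i, ∑ j, g i j (P i j) with hF
  have hobj : ∀ P : Matrix (Fin m) (Fin n) ℝ,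
      (∑ i, ∑ j, C i j * P i j) -
        ε * (-(∑ i, ∑ j, P i j * (Real.log (P i j) - 1))) = F P := by
    intro P
    simp only [hF, hg, Finset.sum_add_distrib, ← Finset.mul_sum]
    ring
  -- per-entry tangent inequality
  have hkey : ∀ i j x, 0 ≤ x →
      g i j (Pstar i j) + lam i * (x - Pstar i j) ≤ g i j x := by
    intro i j x hx
    have hk := key_ineq hx (hPpos i j)
    have hrw : g i j x - (g i j (Pstar i j) + lam i * (x - Pstar i j)) =
        ε * (x * Real.log x - (Pstar i j * Real.log (Pstar i j) +
          (Real.log (Pstar i j) + 1) * (x - Pstar i j))) := by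
      simp only [hg, hlam]
      rw [hlogP i j]
      field_simp
      ring
    nlinarith [mul_nonneg hε.le (sub_nonneg.mpr hk)]
  have hkey' : ∀ i j x, 0 ≤ x → x ≠ Pstar i j →
      g i j (Pstar i j) + lam i * (x - Pstar i j) < g i j x := by
    intro i j x hx hne
    have hk := key_ineq_strict hx (hPpos i j) hne
    have hrw : g i j x - (g i j (Pstar i j) + lam i * (x - Pstar i j)) =
        ε * (x * Real.log x - (Pstar i j * Real.log (Pstar i j) +
          (Real.log (Pstar i j) + 1) * (x - Pstar i j))) := by
      simp only [hg, hlam]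
      rw [hlogP i j]
      field_simp
      ring
    nlinarith [mul_pos hε (sub_pos.mpr hk)]
  -- difference of objectives as a sum of nonnegative terms
  have hdiff : ∀ P : Matrix (Fin m) (Fin n) ℝ,
      (∀ i, ∑ j, P i j = 1 / (m:ℝ)) →
      F P - F Pstar = ∑ i, ∑ j,
        (g i j (P i j) - (g i j (Pstar i j) + lam i * (P i j - Pstar i j))) := by
    intro P hPs
    have : ∀ i, ∑ j, (g i j (P i j) -
        (g i j (Pstar i j) + lam i * (P i j - Pstar i j))) =
        (∑ j, g i j (P i j)) - ∑ j, g i j (Pstar i j) := by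
      intro i
      have hz : ∑ j, lam i * (P i j - Pstar i j) = 0 := by
        rw [← Finset.mul_sum, Finset.sum_sub_distrib, hPs i, hrowstar i]
        ring
      simp only [sub_add_eq_sub_sub]
      rw [Finset.sum_sub_distrib, Finset.sum_sub_distrib, hz]
      ring
    simp only [this, hF, Finset.sum_sub_distrib]
  have hmin : ∀ P ∈ {P : Matrix (Fin m) (Fin n) ℝ |
      (∀ i j, 0 ≤ P i j) ∧ (∀ i, ∑ j, P i j = 1 / (m : ℝ))}, F Pstar ≤ F P := by
    intro P hP
    have h0 : 0 ≤ F P - F Pstar := by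
      rw [hdiff P hP.2]
      exact Finset.sum_nonneg fun i _ => Finset.sum_nonneg fun j _ =>
        sub_nonneg.mpr (hkey i j (P i j) (hP.1 i j))
    linarith
  refine ⟨hmem, ?_, ?_⟩
  · intro P hP
    simp only [Set.mem_setOf_eq] at hP
    simp only [hobj]
    exact hmin P hP
  · intro P hP hminP
    have h1 : F P ≤ F Pstar := by
      have := hminP hmem
      simpa only [hobj, Set.mem_setOf_eq] using this
    have h2 : F Pstar ≤ F P := hmin P hP
    have heq : F P - F Pstar = 0 := by linarith
    rw [hdiff P hP.2] at heq
    have hzero : ∀ i ∈ Finset.univ, ∀ j ∈ Finset.univ,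
        (g i j (P i j) - (g i j (Pstar i j) + lam i * (P i j - Pstar i j))) = 0 := by
      have houter := (Finset.sum_eq_zero_iff_of_nonneg (fun i _ =>
        Finset.sum_nonneg fun j _ =>
          sub_nonneg.mpr (hkey i j (P i j) (hP.1 i j)))).mp heq
      intro i hi j hj
      exact (Finset.sum_eq_zero_iff_of_nonneg (fun j _ =>
        sub_nonneg.mpr (hkey i j (P i j) (hP.1 i j)))).mp (houter i hi) j hj
    funext i j
    by_contra hne
    have := hkey' i j (P i j) (hP.1 i j) hne
    have hz := hzero i (Finset.mem_univ i) j (Finset.mem_univ j)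
    linarith
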